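/- For every j ∈ [n−1] and every t ≥ 0, the matrix P := exp(−t · e^{(p)}_{(j,j)}) satisfies detailed balance with respect to p: p_a P_{ab} = p_b P_{ba} for all a, b ∈ [n]. In particular p_j P_{jn} = p_n P_{nj}. -/

import Mathlib

open Matrix

/-- The ratio `r_j := p_j / p_n` for `j ∈ [n-1]`, with the state space `[n]` modeled as
`Fin (m+1)`, the last state `n` as `Fin.last m`, and `[n-1]` as `Fin m` via `Fin.castSucc`. -/
noncomputable def r (m : ℕ) (p : Fin (m + 1) → ℝ) (j : Fin m) : ℝ :=
  p j.castSucc / p (Fin.last m)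

/-- `e^{(p)}_{(j,k)} := (e_j − r_j e_n)(e_k^T − e_n^T)` as an `(m+1) × (m+1)` real matrix. -/
noncomputable def Ep (m : ℕ) (p : Fin (m + 1) → ℝ) (j k : Fin m) :
    Matrix (Fin (m + 1)) (Fin (m + 1)) ℝ :=
  Matrix.vecMulVec
    (fun a => (if a = j.castSucc then (1 : ℝ) else 0) -
      r m p j * (if a = Fin.last m then (1 : ℝ) else 0))
    (fun b => (if b = k.castSucc then (1 : ℝ) else 0) - (if b = Fin.last m then (1 : ℝ) else 0))

open NormedSpace in
/-- for `t ≥ 0`, `P := exp(−t e^{(p)}_{(j,j)})` satisfies detailed balance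
with respect to `p`: `p_a P_{ab} = p_b P_{ba}` for all `a, b`; in particular
`p_j P_{jn} = p_n P_{nj}`. -/
theorem stmt10 (m : ℕ) (hm : 1 ≤ m) (p : Fin (m + 1) → ℝ)
    (hp : ∀ a, 0 < p a) (hsum : ∑ a, p a = 1) (j : Fin m) (t : ℝ) (ht : 0 ≤ t) :
    (∀ a b, p a * NormedSpace.exp (-(t • Ep m p j j)) a b = p b * NormedSpace.exp (-(t • Ep m p j j)) b a) ∧
    p j.castSucc * NormedSpace.exp (-(t • Ep m p j j)) j.castSucc (Fin.last m) =
      p (Fin.last m) * NormedSpace.exp (-(t • Ep m p j j)) (Fin.last m) j.castSucc := by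
  set A : Matrix (Fin (m + 1)) (Fin (m + 1)) ℝ := -(t • Ep m p j j) with hA
  set D : Matrix (Fin (m + 1)) (Fin (m + 1)) ℝ := Matrix.diagonal p with hD
  have hpn : p (Fin.last m) ≠ 0 := (hp _).ne'
  -- u and v
  set u : Fin (m + 1) → ℝ := fun a => (if a = j.castSucc then (1 : ℝ) else 0) -
      r m p j * (if a = Fin.last m then (1 : ℝ) else 0) with hu
  set v : Fin (m + 1) → ℝ := fun b => (if b = j.castSucc then (1 : ℝ) else 0) -
      (if b = Fin.last m then (1 : ℝ) else 0) with hv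
  have hjne : (j.castSucc : Fin (m + 1)) ≠ Fin.last m := (Fin.castSucc_lt_last j).ne
  have huv : ∀ a, p a * u a = p j.castSucc * v a := by
    intro a
    simp only [hu, hv]
    rcases eq_or_ne a j.castSucc with rfl | h1
    · simp [hjne]
    · rcases eq_or_ne a (Fin.last m) with rfl | h2
      · simp only [if_neg h1, if_pos rfl, r]
        field_simp
        ring
      · simp [h1, h2]
  -- detailed balance for Ep
  have hEp : ∀ a b, p a * Ep m p j j a b = p b * Ep m p j j b a := by
    intro a b
    have : Ep m p j j a b = u a * v b := rfl
    rw [this]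
    have : Ep m p j j b a = u b * v a := rfl
    rw [this]
    calc p a * (u a * v b) = (p a * u a) * v b := by ring
    _ = (p j.castSucc * v a) * v b := by rw [huv]
    _ = (p j.castSucc * v b) * v a := by ring
    _ = (p b * u b) * v a := by rw [huv]
    _ = p b * (u b * v a) := by ring
  have key : D * A = Aᵀ * D := by
    ext a b
    simp only [hD, Matrix.diagonal_mul, Matrix.mul_diagonal, Matrix.transpose_apply, hA,
      Matrix.neg_apply, Matrix.smul_apply, smul_eq_mul]
    have := hEp a b
    ring_nf
    nlinarith [hEp a b]
  have hUnit : IsUnit D := by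
    rw [hD, Matrix.isUnit_iff_isUnit_det, Matrix.det_diagonal]
    exact (Finset.prod_pos fun a _ => hp a).ne'.isUnit
  have hDD : D * D⁻¹ = 1 := Matrix.mul_nonsing_inv D ((Matrix.isUnit_iff_isUnit_det D).mp hUnit)
  have hAt : Aᵀ = D * A * D⁻¹ := by
    calc Aᵀ = Aᵀ * (D * D⁻¹) := by rw [hDD, mul_one]
    _ = (Aᵀ * D) * D⁻¹ := by rw [mul_assoc]
    _ = (D * A) * D⁻¹ := by rw [key]
  have hexp : (NormedSpace.exp A)ᵀ = D * NormedSpace.exp A * D⁻¹ := by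
    rw [← Matrix.exp_transpose, hAt, Matrix.exp_conj D A hUnit]
  have main : D * NormedSpace.exp A = (NormedSpace.exp A)ᵀ * D := by
    rw [hexp, mul_assoc, Matrix.nonsing_inv_mul D ((Matrix.isUnit_iff_isUnit_det D).mp hUnit),
      mul_one]
  have entry : ∀ a b, p a * NormedSpace.exp A a b = p b * NormedSpace.exp A b a := by
    intro a b
    have := congrFun (congrFun main a) b
    simpa [hD, Matrix.diagonal_mul, Matrix.mul_diagonal, Matrix.transpose_apply, mul_comm]
      using this
  exact ⟨entry, entry _ _⟩
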